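/- Let n ≥ 4 be a natural number. For natural numbers e₁ ≤ e₂ ≤ e₃ ≤ e₄ ≤ e₅ ≤ e₆, the equation 2^{e₁} + 2^{e₂} + 2^{e₃} + 2^{e₄} + 2^{e₅} + 2^{e₆} = 3 + 2^{n+2} + 2^{n+3} holds if and only if the tuple (e₁, e₂, e₃, e₄, e₅, e₆) is one of the following four tuples: (0, 0, 0, n+1, n+1, n+3), (0, 0, 0, n+2, n+2, n+2), (0, 1, n, n, n+1, n+3), (0, 1, n+1, n+1, n+2, n+2). -/
import Mathlib

/-- Two powers of two summing to a power of two. -/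
lemma two_pow_add_eq {a b k : ℕ} (hab : a ≤ b) (h : 2^a + 2^b = 2^k) :
    a = b ∧ k = a + 1 := by
  have hp : 0 < (2:ℕ)^a := by positivity
  rcases eq_or_lt_of_le hab with rfl | hlt
  · refine ⟨rfl, ?_⟩
    have h2 : (2:ℕ)^(a+1) = 2^k := by rw [pow_succ]; omega
    have := Nat.pow_right_injective (le_refl 2) h2
    omega
  · exfalso
    have hs : (2:ℕ)^(a+1) = 2 * 2^a := by rw [pow_succ]; ring
    have h1 : (2:ℕ)^(a+1) ≤ 2^b := Nat.pow_le_pow_right (by norm_num) hlt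
    have hk : a + 1 < k := by
      have : (2:ℕ)^(a+1) < 2^k := by omega
      exact (Nat.pow_lt_pow_iff_right (by norm_num)).mp this
    have d1 : (2:ℕ)^(a+1) ∣ 2^b := pow_dvd_pow 2 hlt
    have d2 : (2:ℕ)^(a+1) ∣ 2^k := pow_dvd_pow 2 hk.le
    have d3 : (2:ℕ)^(a+1) ∣ 2^a := by
      have he : (2:ℕ)^a = 2^k - 2^b := by omega
      rw [he]; exact Nat.dvd_sub d2 d1
    have h4 := Nat.le_of_dvd hp d3
    omega

/-- Three powers of two summing to a power of two. -/
lemma three_pow_add_eq {a b c k : ℕ} (hab : a ≤ b) (hbc : b ≤ c)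
    (h : 2^a + 2^b + 2^c = 2^k) : a = b ∧ c = a + 1 ∧ k = c + 1 := by
  have pa : 0 < (2:ℕ)^a := by positivity
  have pab : (2:ℕ)^a ≤ 2^b := Nat.pow_le_pow_right (by norm_num) hab
  have pbc : (2:ℕ)^b ≤ 2^c := Nat.pow_le_pow_right (by norm_num) hbc
  have hs1 : (2:ℕ)^(c+1) = 2 * 2^c := by rw [pow_succ]; ring
  have hs2 : (2:ℕ)^(c+2) = 4 * 2^c := by rw [pow_succ, pow_succ]; ring
  have hck : c < k := by
    have : (2:ℕ)^c < 2^k := by omega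
    exact (Nat.pow_lt_pow_iff_right (by norm_num)).mp this
  have hkc : k < c + 2 := by
    have : (2:ℕ)^k < 2^(c+2) := by omega
    exact (Nat.pow_lt_pow_iff_right (by norm_num)).mp this
  have hk : k = c + 1 := by omega
  subst hk
  have hab' : 2^a + 2^b = 2^c := by omega
  obtain ⟨h1, h2⟩ := two_pow_add_eq hab hab'
  exact ⟨h1, h2, rfl⟩

/-- Three powers of two summing to `3 * 2^m`. -/
lemma three_pow_add_eq3 {a b c m : ℕ} (hab : a ≤ b) (hbc : b ≤ c)
    (h : 2^a + 2^b + 2^c = 2^m + 2^(m+1)) :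
    (a + 1 = m ∧ b + 1 = m ∧ c = m + 1) ∨ (a = m ∧ b = m ∧ c = m) := by
  have pa : 0 < (2:ℕ)^a := by positivity
  have pab : (2:ℕ)^a ≤ 2^b := Nat.pow_le_pow_right (by norm_num) hab
  have pbc : (2:ℕ)^b ≤ 2^c := Nat.pow_le_pow_right (by norm_num) hbc
  have hs1 : (2:ℕ)^(m+1) = 2 * 2^m := by rw [pow_succ]; ring
  have hs2 : (2:ℕ)^(m+2) = 4 * 2^m := by rw [pow_succ, pow_succ]; ring
  have hcm : m ≤ c := by
    by_contra hcon
    have : (2:ℕ)^c < 2^m := Nat.pow_lt_pow_right (by norm_num) (by omega)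
    omega
  have hcm2 : c < m + 2 := by
    have : (2:ℕ)^c < 2^(m+2) := by omega
    exact (Nat.pow_lt_pow_iff_right (by norm_num)).mp this
  rcases (by omega : c = m ∨ c = m + 1) with rfl | rfl
  · right
    have hab' : 2^a + 2^b = 2^(c+1) := by omega
    obtain ⟨h1, h2⟩ := two_pow_add_eq hab hab'
    omega
  · left
    have hab' : 2^a + 2^b = 2^m := by omega
    obtain ⟨h1, h2⟩ := two_pow_add_eq hab hab'
    omega

/-- Four powers of two summing to `3 * 2^m`. -/
lemma four_pow_add_eq3 {a b c d m : ℕ} (hab : a ≤ b) (hbc : b ≤ c) (hcd : c ≤ d)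
    (h : 2^a + 2^b + 2^c + 2^d = 2^m + 2^(m+1)) :
    (a + 2 = m ∧ b + 2 = m ∧ c + 1 = m ∧ d = m + 1) ∨
    (a + 1 = m ∧ b + 1 = m ∧ c = m ∧ d = m) := by
  have pa : 0 < (2:ℕ)^a := by positivity
  have pab : (2:ℕ)^a ≤ 2^b := Nat.pow_le_pow_right (by norm_num) hab
  have pbc : (2:ℕ)^b ≤ 2^c := Nat.pow_le_pow_right (by norm_num) hbc
  have pcd : (2:ℕ)^c ≤ 2^d := Nat.pow_le_pow_right (by norm_num) hcd
  have hs1 : (2:ℕ)^(m+1) = 2 * 2^m := by rw [pow_succ]; ring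
  have hs2 : (2:ℕ)^(m+2) = 4 * 2^m := by rw [pow_succ, pow_succ]; ring
  have hdm : m ≤ d := by
    by_contra hcon
    have h1 : (2:ℕ)^(d+1) ≤ 2^m := Nat.pow_le_pow_right (by norm_num) (by omega)
    have h2 : (2:ℕ)^(d+1) = 2 * 2^d := by rw [pow_succ]; ring
    omega
  have hdm2 : d < m + 2 := by
    have : (2:ℕ)^d < 2^(m+2) := by omega
    exact (Nat.pow_lt_pow_iff_right (by norm_num)).mp this
  rcases (by omega : d = m ∨ d = m + 1) with rfl | rfl
  · right
    have hab' : 2^a + 2^b + 2^c = 2^(d+1) := by omega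
    obtain ⟨h1, h2, h3⟩ := three_pow_add_eq hab hbc hab'
    omega
  · left
    have hab' : 2^a + 2^b + 2^c = 2^m := by omega
    obtain ⟨h1, h2, h3⟩ := three_pow_add_eq hab hbc hab'
    omega

/-- Let `n ≥ 4`. For naturals `e₁ ≤ e₂ ≤ e₃ ≤ e₄ ≤ e₅ ≤ e₆`,
one has `2^e₁ + 2^e₂ + 2^e₃ + 2^e₄ + 2^e₅ + 2^e₆ = 3 + 2^(n+2) + 2^(n+3)` iff
the tuple `(e₁,…,e₆)` is one of the four listed tuples. -/
theorem six_powers_of_two_sum_eq_three (n : ℕ) (hn : 4 ≤ n)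
    (e₁ e₂ e₃ e₄ e₅ e₆ : ℕ)
    (h₁₂ : e₁ ≤ e₂) (h₂₃ : e₂ ≤ e₃) (h₃₄ : e₃ ≤ e₄) (h₄₅ : e₄ ≤ e₅) (h₅₆ : e₅ ≤ e₆) :
    2 ^ e₁ + 2 ^ e₂ + 2 ^ e₃ + 2 ^ e₄ + 2 ^ e₅ + 2 ^ e₆ = 3 + 2 ^ (n + 2) + 2 ^ (n + 3) ↔
      (e₁, e₂, e₃, e₄, e₅, e₆) = (0, 0, 0, n + 1, n + 1, n + 3) ∨
      (e₁, e₂, e₃, e₄, e₅, e₆) = (0, 0, 0, n + 2, n + 2, n + 2) ∨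
      (e₁, e₂, e₃, e₄, e₅, e₆) = (0, 1, n, n, n + 1, n + 3) ∨
      (e₁, e₂, e₃, e₄, e₅, e₆) = (0, 1, n + 1, n + 1, n + 2, n + 2) := by
  have key1 : (2:ℕ)^(n+1) = 2 * 2^n := by rw [pow_succ]; ring
  have key2 : (2:ℕ)^(n+2) = 4 * 2^n := by rw [pow_succ, pow_succ]; ring
  have key3 : (2:ℕ)^(n+3) = 8 * 2^n := by rw [pow_succ, pow_succ, pow_succ]; ring
  constructor
  · intro h
    have he1 : e₁ = 0 := by
      by_contra h0
      have d1 : 2 ∣ 2^e₁ := dvd_pow_self 2 h0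
      have d2 : 2 ∣ 2^e₂ := dvd_pow_self 2 (by omega : e₂ ≠ 0)
      have d3 : 2 ∣ 2^e₃ := dvd_pow_self 2 (by omega : e₃ ≠ 0)
      have d4 : 2 ∣ 2^e₄ := dvd_pow_self 2 (by omega : e₄ ≠ 0)
      have d5 : 2 ∣ 2^e₅ := dvd_pow_self 2 (by omega : e₅ ≠ 0)
      have d6 : 2 ∣ 2^e₆ := dvd_pow_self 2 (by omega : e₆ ≠ 0)
      omega
    subst he1
    rcases Nat.eq_zero_or_pos e₂ with he2 | he2
    · subst he2
      have he3 : e₃ = 0 := by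
        by_contra h0
        have d3 : 2 ∣ 2^e₃ := dvd_pow_self 2 h0
        have d4 : 2 ∣ 2^e₄ := dvd_pow_self 2 (by omega : e₄ ≠ 0)
        have d5 : 2 ∣ 2^e₅ := dvd_pow_self 2 (by omega : e₅ ≠ 0)
        have d6 : 2 ∣ 2^e₆ := dvd_pow_self 2 (by omega : e₆ ≠ 0)
        simp only [pow_zero] at h
        omega
      subst he3
      simp only [pow_zero] at h
      have h' : 2^e₄ + 2^e₅ + 2^e₆ = 2^(n+2) + 2^((n+2)+1) := by
        have : (2:ℕ)^((n+2)+1) = 8 * 2^n := by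
          rw [pow_succ, pow_succ, pow_succ]; ring
        omega
      rcases three_pow_add_eq3 h₄₅ h₅₆ h' with ⟨a, b, c⟩ | ⟨a, b, c⟩
      · exact Or.inl (by rw [show e₄ = n + 1 by omega, show e₅ = n + 1 by omega,
          show e₆ = n + 3 by omega])
      · exact Or.inr (Or.inl (by rw [show e₄ = n + 2 by omega, show e₅ = n + 2 by omega,
          show e₆ = n + 2 by omega]))
    · have he2' : e₂ = 1 := by
        by_contra h0
        have hge : 2 ≤ e₂ := by omega
        have d2 : 4 ∣ 2^e₂ := by
          have := pow_dvd_pow 2 hge; norm_num at this; exact this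
        have d3 : 4 ∣ 2^e₃ := by
          have := pow_dvd_pow 2 (show 2 ≤ e₃ by omega); norm_num at this; exact this
        have d4 : 4 ∣ 2^e₄ := by
          have := pow_dvd_pow 2 (show 2 ≤ e₄ by omega); norm_num at this; exact this
        have d5 : 4 ∣ 2^e₅ := by
          have := pow_dvd_pow 2 (show 2 ≤ e₅ by omega); norm_num at this; exact this
        have d6 : 4 ∣ 2^e₆ := by
          have := pow_dvd_pow 2 (show 2 ≤ e₆ by omega); norm_num at this; exact this
        simp only [pow_zero] at h
        omega
      subst he2'
      simp only [pow_zero, pow_one] at h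
      have h' : 2^e₃ + 2^e₄ + 2^e₅ + 2^e₆ = 2^(n+2) + 2^((n+2)+1) := by
        have : (2:ℕ)^((n+2)+1) = 8 * 2^n := by
          rw [pow_succ, pow_succ, pow_succ]; ring
        omega
      rcases four_pow_add_eq3 h₃₄ h₄₅ h₅₆ h' with ⟨a, b, c, d⟩ | ⟨a, b, c, d⟩
      · exact Or.inr (Or.inr (Or.inl (by rw [show e₃ = n by omega, show e₄ = n by omega,
          show e₅ = n + 1 by omega, show e₆ = n + 3 by omega])))
      · exact Or.inr (Or.inr (Or.inr (by rw [show e₃ = n + 1 by omega, show e₄ = n + 1 by omega,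
          show e₅ = n + 2 by omega, show e₆ = n + 2 by omega])))
  · intro h
    rcases h with h | h | h | h <;>
      simp only [Prod.mk.injEq] at h <;>
      obtain ⟨h1, h2, h3, h4, h5, h6⟩ := h <;>
      subst h1 <;> subst h2 <;> subst h3 <;> subst h4 <;> subst h5 <;> subst h6 <;>
      simp only [pow_zero, pow_one] <;>
      omega
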